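/- If F = {P, Q} is a linear symplectomorphism of a complex Hilbert space, then ‖Q (conj P)⁻¹‖ = ‖Q‖ (1 + ‖Q‖²)^{−1/2} < 1. -/

import Mathlib

open scoped ComplexInnerProductSpace

set_option maxHeartbeats 1000000

private lemma inner_self_complex {H : Type*} [NormedAddCommGroup H]
    [InnerProductSpace ℂ H] (a : H) : (⟪a, a⟫ : ℂ) = (‖a‖ : ℂ) ^ 2 :=
  inner_self_eq_norm_sq_to_K a

private lemma sq_le_imp {x y : ℝ} (hx : 0 ≤ x) (hy : 0 ≤ y) (h : x ^ 2 ≤ y ^ 2) : x ≤ y := by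
  nlinarith

/-- If `F = {P,Q}` is a linear symplectomorphism of a complex Hilbert
space, then `conj P` (the operator `x ↦ σ (P (σ x))`) is invertible and
`‖Q (conj P)⁻¹‖ = ‖Q‖ (1 + ‖Q‖²)^{-1/2} < 1`. -/
theorem stmt6 {H : Type*} [NormedAddCommGroup H] [InnerProductSpace ℂ H] [CompleteSpace H]
    (σ : H →L[ℝ] H) (hσσ : ∀ x : H, σ (σ x) = x)
    (hσsmul : ∀ (c : ℂ) (x : H), σ (c • x) = (starRingEnd ℂ c) • σ x)
    (hσinner : ∀ x y : H, ⟪σ x, σ y⟫ = ⟪y, x⟫)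
    (P Q : H →L[ℂ] H)
    (F : H → H) (hF : ∀ u : H, F u = P u + Q (σ u))
    (hFbij : Function.Bijective F)
    (ω : H → H → ℂ)
    (hω : ∀ u v : H, ω u v = (Complex.I / 2) * (⟪u, v⟫ - (starRingEnd ℂ) ⟪u, v⟫))
    (hsymp : ∀ u v : H, ω (F u) (F v) = ω u v) :
    ∃ Pc : H ≃L[ℂ] H, (∀ x : H, Pc x = σ (P (σ x))) ∧
      ‖Q.comp (Pc.symm : H →L[ℂ] H)‖ = ‖Q‖ / Real.sqrt (1 + ‖Q‖ ^ 2) ∧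
      ‖Q.comp (Pc.symm : H →L[ℂ] H)‖ < 1 := by
  -- σ preserves norms
  have hσnorm : ∀ x : H, ‖σ x‖ = ‖x‖ := by
    intro x
    have h := hσinner x x
    rw [inner_self_eq_norm_sq_to_K, inner_self_eq_norm_sq_to_K] at h
    have h2 : (‖σ x‖ : ℝ) ^ 2 = ‖x‖ ^ 2 := by exact_mod_cast h
    nlinarith [norm_nonneg (σ x), norm_nonneg x]
  -- symplectic implies Im-invariance
  have him : ∀ u v : H, (⟪F u, F v⟫).im = (⟪u, v⟫).im := by
    intro u v
    have h := hsymp u v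
    rw [hω, hω] at h
    have h2 := mul_left_cancel₀ (by simp [Complex.I_ne_zero] : (Complex.I / 2 : ℂ) ≠ 0) h
    rw [Complex.sub_conj, Complex.sub_conj] at h2
    have h3 := mul_right_cancel₀ Complex.I_ne_zero h2
    have h4 : (2:ℝ) * (⟪F u, F v⟫).im = 2 * (⟪u, v⟫).im := by exact_mod_cast h3
    linarith
  -- key algebraic lemma
  have lemA : ∀ a b : H, (⟪a + b, Complex.I • (a - b)⟫).im = ‖a‖ ^ 2 - ‖b‖ ^ 2 := by
    intro a b
    have e : ⟪a + b, Complex.I • (a - b)⟫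
        = Complex.I * ((‖a‖ : ℂ) ^ 2 - (‖b‖ : ℂ) ^ 2 + ((starRingEnd ℂ) ⟪a, b⟫ - ⟪a, b⟫)) := by
      rw [inner_smul_right]
      rw [inner_add_left, inner_sub_right, inner_sub_right,
        inner_self_complex, inner_self_complex, ← inner_conj_symm a b]
      simp only [starRingEnd_self_apply]
      ring
    rw [e]
    have h5 : (⟪a, b⟫ : ℂ).re = (⟪b, a⟫ : ℂ).re := by
      rw [← inner_conj_symm a b, Complex.conj_re]
    simp [Complex.mul_im, Complex.add_re, Complex.sub_re, Complex.conj_re]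
    norm_cast
    linarith
  -- F at I • u
  have hFi : ∀ u : H, F (Complex.I • u) = Complex.I • (P u - Q (σ u)) := by
    intro u
    rw [hF, hσsmul, map_smul, map_smul, Complex.conj_I, smul_sub]
    simp [sub_eq_add_neg]
  have hdiag : ∀ u : H, ‖P u‖ ^ 2 = ‖u‖ ^ 2 + ‖Q (σ u)‖ ^ 2 := by
    intro u
    have h := him u (Complex.I • u)
    rw [hFi, hF] at h
    rw [lemA] at h
    have h2 : (⟪u, Complex.I • u⟫).im = ‖u‖ ^ 2 := by
      rw [inner_smul_right, inner_self_complex]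
      simp [Complex.mul_im]
      norm_cast
    rw [h2] at h
    linarith
  have hIm : ∀ w : H, (⟪w, Complex.I • w⟫).im = ‖w‖ ^ 2 := by
    intro w
    rw [inner_smul_right, inner_self_complex]
    simp [Complex.mul_im]
    norm_cast
  -- the adjoint-type inverse of F
  set Pa := ContinuousLinearMap.adjoint P with hPadef
  set Qa := ContinuousLinearMap.adjoint Q with hQadef
  set F' : H → H := (fun w => Pa w - σ (Qa w)) with hF'def
  have hadj : ∀ u w : H, (⟪F u, w⟫).im = (⟪u, F' w⟫).im := by
    intro u w
    rw [hF]
    have h1 : (⟪P u, w⟫ : ℂ) = ⟪u, Pa w⟫ :=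
      (ContinuousLinearMap.adjoint_inner_right P u w).symm
    have h2 : (⟪Q (σ u), w⟫ : ℂ) = (starRingEnd ℂ) ⟪u, σ (Qa w)⟫ := by
      have e1 : (⟪Q (σ u), w⟫ : ℂ) = ⟪σ u, Qa w⟫ :=
        (ContinuousLinearMap.adjoint_inner_right Q (σ u) w).symm
      have e2 : (⟪σ u, Qa w⟫ : ℂ) = ⟪σ (Qa w), u⟫ := by
        rw [← hσinner u (σ (Qa w)), hσσ]
      rw [e1, e2]
      exact (inner_conj_symm _ _).symm
    rw [inner_add_left, h1, h2]
    show _ = (⟪u, Pa w - σ (Qa w)⟫ : ℂ).im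
    rw [inner_sub_right]
    simp only [Complex.add_im, Complex.sub_im, Complex.conj_im]
    ring
  have hFinv : ∀ w : H, F (F' w) = w := by
    intro w
    obtain ⟨z, hz⟩ := hFbij.2 w
    have e1 : ∀ u : H, (⟪u, F' w⟫).im = (⟪u, z⟫).im := by
      intro u
      rw [← hadj u w, ← hz]
      exact him u z
    have hall : ∀ u : H, (⟪u, F' w - z⟫ : ℂ) = 0 := by
      intro u
      have h1 := e1 u
      have h2 := e1 (Complex.I • u)
      rw [inner_smul_left, inner_smul_left, Complex.conj_I] at h2
      rw [inner_sub_right]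
      apply Complex.ext
      · simp only [Complex.mul_im, Complex.neg_re, Complex.neg_im, Complex.I_re,
          Complex.I_im, Complex.sub_re, Complex.zero_re] at h2 ⊢
        linarith
      · simp only [Complex.sub_im, Complex.zero_im]
        linarith
    have h0 := hall (F' w - z)
    rw [inner_self_eq_zero, sub_eq_zero] at h0
    rw [h0, hz]
  have him' : ∀ u v : H, (⟪F' u, F' v⟫).im = (⟪u, v⟫).im := by
    intro u v
    conv_rhs => rw [← hFinv u, ← hFinv v]
    exact (him (F' u) (F' v)).symm
  have hdiag2 : ∀ w : H, ‖Pa w‖ ^ 2 = ‖w‖ ^ 2 + ‖Qa w‖ ^ 2 := by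
    intro w
    have h := him' w (Complex.I • w)
    have e1 : F' w = Pa w + -(σ (Qa w)) := by
      show Pa w - σ (Qa w) = _
      rw [sub_eq_add_neg]
    have e2 : F' (Complex.I • w) = Complex.I • (Pa w - -(σ (Qa w))) := by
      show Pa (Complex.I • w) - σ (Qa (Complex.I • w)) = _
      rw [map_smul, map_smul, hσsmul, Complex.conj_I]
      module
    rw [e1, e2, lemA, hIm] at h
    have e3 : ‖-(σ (Qa w))‖ = ‖Qa w‖ := by rw [norm_neg, hσnorm]
    rw [e3] at h
    linarith
  -- P is bounded below and has dense range, hence surjective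
  have hPlow : ∀ u : H, ‖u‖ ≤ ‖P u‖ := by
    intro u
    have h := hdiag u
    nlinarith [norm_nonneg u, norm_nonneg (P u), norm_nonneg (Q (σ u))]
  have hPalow : ∀ w : H, ‖w‖ ≤ ‖Pa w‖ := by
    intro w
    have h := hdiag2 w
    nlinarith [norm_nonneg w, norm_nonneg (Pa w), norm_nonneg (Qa w)]
  have hPsurj : Function.Surjective P := by
    have hclosed : IsClosed (Set.range P) :=
      (ContinuousLinearMap.antilipschitz_of_bound P (K := 1) (fun x => by
        simpa using hPlow x)).isClosed_range P.uniformContinuous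
    have hclosed' : IsClosed ((LinearMap.range (P : H →ₗ[ℂ] H) : Submodule ℂ H) : Set H) := by
      rwa [LinearMap.coe_range]
    haveI : CompleteSpace (LinearMap.range (P : H →ₗ[ℂ] H)) := hclosed'.completeSpace_coe
    have horth : (LinearMap.range (P : H →ₗ[ℂ] H))ᗮ = ⊥ := by
      rw [Submodule.eq_bot_iff]
      intro w hw
      have hPaw : Pa w = 0 := by
        have hz : ∀ u : H, (⟪u, Pa w⟫ : ℂ) = 0 := by
          intro u
          have h1 := (Submodule.mem_orthogonal _ _).mp hw (P u) ⟨u, rfl⟩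
          rw [hPadef, ContinuousLinearMap.adjoint_inner_right]
          exact h1
        have h0 := hz (Pa w)
        rwa [inner_self_eq_zero] at h0
      have h2 := hPalow w
      rw [hPaw, norm_zero] at h2
      exact norm_le_zero_iff.mp h2
    have htop : LinearMap.range (P : H →ₗ[ℂ] H) = ⊤ := Submodule.orthogonal_eq_bot_iff.mp horth
    exact LinearMap.range_eq_top.mp htop
  -- the conjugated operator Pt = σ ∘ P ∘ σ
  let Ptl : H →ₗ[ℂ] H :=
    { toFun := fun x => σ (P (σ x))
      map_add' := by intro x y; simp [map_add]
      map_smul' := by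
        intro c x
        show σ (P (σ (c • x))) = _
        rw [hσsmul, map_smul, hσsmul]
        simp }
  have hPtc : Continuous Ptl := σ.continuous.comp (P.continuous.comp σ.continuous)
  let Pt : H →L[ℂ] H := ⟨Ptl, hPtc⟩
  have hPt : ∀ x : H, Pt x = σ (P (σ x)) := fun _ => rfl
  have hPtnorm : ∀ x : H, ‖Pt x‖ ^ 2 = ‖x‖ ^ 2 + ‖Q x‖ ^ 2 := by
    intro x
    rw [hPt, hσnorm]
    have h := hdiag (σ x)
    rwa [hσnorm, hσσ] at h
  have hPtlow : ∀ x : H, ‖x‖ ≤ ‖Pt x‖ := by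
    intro x
    have h := hPtnorm x
    nlinarith [norm_nonneg x, norm_nonneg (Pt x), norm_nonneg (Q x)]
  have hPtinj : LinearMap.ker (Pt : H →ₗ[ℂ] H) = ⊥ := by
    rw [LinearMap.ker_eq_bot, ContinuousLinearMap.coe_coe]
    intro x y hxy
    have h0 : ‖x - y‖ ≤ 0 := by
      simpa [map_sub, hxy] using hPtlow (x - y)
    have h1 : x - y = 0 := by
      have := le_antisymm h0 (norm_nonneg _)
      rwa [norm_eq_zero] at this
    rwa [sub_eq_zero] at h1
  have hPtsurj : LinearMap.range (Pt : H →ₗ[ℂ] H) = ⊤ := by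
    rw [LinearMap.range_eq_top]
    intro w
    obtain ⟨u, hu⟩ := hPsurj (σ w)
    exact ⟨σ u, by rw [ContinuousLinearMap.coe_coe, hPt, hσσ, hu, hσσ]⟩
  let Pc : H ≃L[ℂ] H := ContinuousLinearEquiv.ofBijective Pt hPtinj hPtsurj
  have hPc : ∀ x : H, Pc x = σ (P (σ x)) := fun _ => rfl
  -- norm computations
  set c := ‖Q‖ with hcdef
  have hc0 : 0 ≤ c := norm_nonneg Q
  have hs1 : (0:ℝ) < 1 + c ^ 2 := by nlinarith
  have hsqrt : 0 < Real.sqrt (1 + c ^ 2) := Real.sqrt_pos.mpr hs1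
  have hsq : (Real.sqrt (1 + c ^ 2)) ^ 2 = 1 + c ^ 2 := Real.sq_sqrt hs1.le
  set A := Q.comp (Pc.symm : H →L[ℂ] H) with hAdef
  have hAx : ∀ x : H, A (Pt x) = Q x := by
    intro x
    have h1 : Pc.symm (Pt x) = x := Pc.symm_apply_apply x
    show Q (Pc.symm (Pt x)) = Q x
    rw [h1]
  have hAle : ‖A‖ ≤ c / Real.sqrt (1 + c ^ 2) := by
    apply ContinuousLinearMap.opNorm_le_bound _ (div_nonneg hc0 hsqrt.le)
    intro y
    obtain ⟨x, hx⟩ := LinearMap.range_eq_top.mp hPtsurj y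
    rw [← hx, ContinuousLinearMap.coe_coe, hAx]
    rw [div_mul_eq_mul_div, le_div_iff₀ hsqrt]
    apply sq_le_imp (by positivity) (by positivity)
    rw [mul_pow, mul_pow, hsq, hPtnorm]
    have h2 := Q.le_opNorm x
    nlinarith [norm_nonneg (Q x), norm_nonneg x]
  have hlt : c / Real.sqrt (1 + c ^ 2) < 1 := by
    rw [div_lt_one hsqrt]
    exact (Real.lt_sqrt hc0).mpr (by nlinarith)
  have ha1 : ‖A‖ < 1 := lt_of_le_of_lt hAle hlt
  have hQle : ∀ x : H, ‖Q x‖ ^ 2 ≤ ‖A‖ ^ 2 * (‖x‖ ^ 2 + ‖Q x‖ ^ 2) := by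
    intro x
    have h1 := A.le_opNorm (Pt x)
    rw [hAx x] at h1
    have h2 := hPtnorm x
    nlinarith [norm_nonneg (Q x), norm_nonneg A, norm_nonneg (Pt x),
      mul_le_mul h1 h1 (norm_nonneg _) (mul_nonneg (norm_nonneg A) (norm_nonneg (Pt x)))]
  have hage : c / Real.sqrt (1 + c ^ 2) ≤ ‖A‖ := by
    set a := ‖A‖ with hadef
    have ha0 : 0 ≤ a := norm_nonneg A
    have h1a : (0:ℝ) < 1 - a ^ 2 := by nlinarith
    have hsa : 0 < Real.sqrt (1 - a ^ 2) := Real.sqrt_pos.mpr h1a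
    have hsa2 : (Real.sqrt (1 - a ^ 2)) ^ 2 = 1 - a ^ 2 := Real.sq_sqrt h1a.le
    have hQb : c ≤ a / Real.sqrt (1 - a ^ 2) := by
      apply ContinuousLinearMap.opNorm_le_bound _ (div_nonneg ha0 hsa.le)
      intro x
      rw [div_mul_eq_mul_div, le_div_iff₀ hsa]
      apply sq_le_imp (by positivity) (by positivity)
      rw [mul_pow, mul_pow, hsa2]
      have h3 := hQle x
      nlinarith [norm_nonneg (Q x), norm_nonneg x]
    rw [le_div_iff₀ hsa] at hQb
    apply sq_le_imp (div_nonneg hc0 hsqrt.le) ha0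
    rw [div_pow, hsq, div_le_iff₀ hs1]
    nlinarith [mul_le_mul hQb hQb (mul_nonneg hc0 hsa.le) ha0, hsa2,
      mul_nonneg hc0 hsa.le]
  have heq : ‖A‖ = c / Real.sqrt (1 + c ^ 2) := le_antisymm hAle hage
  exact ⟨Pc, hPc, heq, ha1⟩
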